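/- The polynomial x³ − 3x² + (3/2)x − 1/6 has exactly one root in the open interval (1/6, 1/2). -/
import Mathlib


theorem alexander_dirk_root :
    ∃! x : ℝ, x ∈ Set.Ioo (1/6 : ℝ) (1/2) ∧ x^3 - 3*x^2 + (3/2)*x - 1/6 = 0 := by
  have key : ∀ x : ℝ, x ∈ Set.Ioo (1/6 : ℝ) (1/2) →
      x^3 - 3*x^2 + (3/2)*x - 1/6 = 0 → (5/12 : ℝ) < x := by
    intro x ⟨h1, h2⟩ hf
    by_contra h
    push_neg at h
    nlinarith [mul_nonneg (mul_nonneg (by linarith : (0:ℝ) ≤ x - 1/6) (by linarith : (0:ℝ) ≤ 5/12 - x)) (by linarith : (0:ℝ) ≤ 29/12 - x)]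
  -- existence via IVT
  have hcont : ContinuousOn (fun x : ℝ => x^3 - 3*x^2 + (3/2)*x - 1/6) (Set.Icc (5/12) (1/2)) := by
    fun_prop
  have hsub := intermediate_value_Ioo' (by norm_num : (5/12:ℝ) ≤ 1/2) hcont
  have h0 : (0:ℝ) ∈ Set.Ioo ((fun x : ℝ => x^3 - 3*x^2 + (3/2)*x - 1/6) (1/2))
      ((fun x : ℝ => x^3 - 3*x^2 + (3/2)*x - 1/6) (5/12)) := by
    constructor <;> norm_num
  obtain ⟨x, hx, hfx⟩ := hsub h0
  refine ⟨x, ⟨⟨by linarith [hx.1], hx.2⟩, hfx⟩, ?_⟩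
  rintro y ⟨hy, hfy⟩
  have hy5 := key y hy hfy
  have hx5 : (5/12:ℝ) < x := hx.1
  have hx2 : x < 1/2 := hx.2
  have hy2 : y < 1/2 := hy.2
  have hfx' : x^3 - 3*x^2 + (3/2)*x - 1/6 = 0 := hfx
  nlinarith [sq_nonneg (x - y), sq_nonneg (x + y), mul_pos (by linarith : (0:ℝ) < 1/2 - x) (by linarith : (0:ℝ) < 1/2 - y)]
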